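/- Let E be a real inner product space, let ι be a type (of points of the manifold), and let P, Q : ι → E →ₗ[ℝ] E be families of linear operators that are skew-adjoint with respect to the inner product: ⟨P(x)u, v⟩ = −⟨u, P(x)v⟩ and ⟨Q(x)u, v⟩ = −⟨u, Q(x)v⟩ for all x, u, v. Let g : ℕ → ι → E be a sequence (of gradients of Hamiltonians) satisfying the Lenard recursion relation P(x)(g k x) = Q(x)(g (k+1) x) for all k ∈ ℕ and all x ∈ ι. Then for all k, l ∈ ℕ and all x ∈ ι, ⟨g k x, P(x)(g l x)⟩ = 0 and ⟨g k x, Q(x)(g l x)⟩ = 0; that is, the Hamiltonians are pairwise in involution with respect to both Poisson structures. -/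
import Mathlib

open scoped RealInnerProductSpace

/-- On a manifold with two Poisson structures given by families of skew-adjoint
operators `P x` and `Q x`, if the gradients `g k` of a sequence of Hamiltonians
satisfy the Lenard recursion relation `P x (g k x) = Q x (g (k+1) x)`, then the
Hamiltonians are pairwise in involution with respect to both Poisson structures. -/
theorem lenard_recursion_involution {E : Type*} [NormedAddCommGroup E]
    [InnerProductSpace ℝ E] {ι : Type*} (P Q : ι → E →ₗ[ℝ] E)
    (hP : ∀ (x : ι) (u v : E), ⟪P x u, v⟫ = -⟪u, P x v⟫)
    (hQ : ∀ (x : ι) (u v : E), ⟪Q x u, v⟫ = -⟪u, Q x v⟫)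
    (g : ℕ → ι → E)
    (hg : ∀ (k : ℕ) (x : ι), P x (g k x) = Q x (g (k + 1) x)) :
    ∀ (k l : ℕ) (x : ι), ⟪g k x, P x (g l x)⟫ = 0 ∧ ⟪g k x, Q x (g l x)⟫ = 0 := by
  -- step: ⟪g k, Q g (l+1)⟫ = ⟪g (k+1), Q g l⟫
  have step : ∀ (k l : ℕ) (x : ι),
      ⟪g k x, Q x (g (l + 1) x)⟫ = ⟪g (k + 1) x, Q x (g l x)⟫ := by
    intro k l x
    have h1 : Q x (g (l + 1) x) = P x (g l x) := (hg l x).symm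
    have h2 : P x (g k x) = Q x (g (k + 1) x) := hg k x
    calc ⟪g k x, Q x (g (l + 1) x)⟫ = ⟪g k x, P x (g l x)⟫ := by rw [h1]
      _ = ⟪P x (g l x), g k x⟫ := real_inner_comm _ _
      _ = -⟪g l x, P x (g k x)⟫ := hP x _ _
      _ = -⟪g l x, Q x (g (k + 1) x)⟫ := by rw [h2]
      _ = ⟪g (k + 1) x, Q x (g l x)⟫ := by
          have := hQ x (g l x) (g (k + 1) x)
          have h4 := real_inner_comm (g (k + 1) x) ((Q x) (g l x))
          linarith
  -- a(k,l) = a(k+l,0)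
  have shift : ∀ (l k : ℕ) (x : ι),
      ⟪g k x, Q x (g l x)⟫ = ⟪g (k + l) x, Q x (g 0 x)⟫ := by
    intro l
    induction l with
    | zero => intro k x; rfl
    | succ l ih =>
      intro k x
      rw [step k l x, ih (k + 1) x]
      ring_nf
  -- skew: a(k,l) = -a(l,k)
  have skew : ∀ (k l : ℕ) (x : ι),
      ⟪g k x, Q x (g l x)⟫ = -⟪g l x, Q x (g k x)⟫ := by
    intro k l x
    have := hQ x (g l x) (g k x)
    rw [real_inner_comm (g k x)] at *
    linarith
  have hQzero : ∀ (k l : ℕ) (x : ι), ⟪g k x, Q x (g l x)⟫ = 0 := by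
    intro k l x
    have h1 := shift l k x
    have h2 := shift k l x
    have h3 := skew k l x
    rw [Nat.add_comm l k] at h2
    linarith
  intro k l x
  refine ⟨?_, hQzero k l x⟩
  rw [hg l x]
  exact hQzero k (l + 1) x
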